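/- Let F(x,y) = (−(x − s(y))/2 + (√3/2)y, −(√3/2)(x − s(y)) − y/2) and let V be as defined below. For every (x,y) ∈ ℝ² not lying on the grid 𝔉 (i.e. (x,y) ∈ U = ℝ² ∖ 𝔉), we have V(F(x,y)) = V(x,y); that is, V is a first integral of F on the zero-free set U. -/

import Mathlib

noncomputable def s (y : ℝ) : ℝ := if 0 ≤ y then 1 else -1

/-- The map `F_α` of the paper for `α = 2π/3`. -/
noncomputable def F (q : ℝ × ℝ) : ℝ × ℝ :=
  (-(q.1 - s q.2) / 2 + (Real.sqrt 3 / 2) * q.2,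
   -(Real.sqrt 3 / 2) * (q.1 - s q.2) - q.2 / 2)

noncomputable def B (q : ℝ × ℝ) : ℤ := ⌊(3 * q.1 - Real.sqrt 3 * q.2) / 6⌋
noncomputable def C (q : ℝ × ℝ) : ℤ := ⌊Real.sqrt 3 * q.2 / 3⌋
noncomputable def D (q : ℝ × ℝ) : ℤ := ⌊(3 * q.1 + Real.sqrt 3 * q.2 + 3) / 6⌋

noncomputable def V (q : ℝ × ℝ) : ℤ :=
  max (max (|B q - C q + D q|) (|B q + C q + D q + 1| - 1)) (|-B q + C q + D q|)

private lemma floor_neg_of_ne (a : ℝ) (ha : ∀ k : ℤ, a ≠ k) : ⌊-a⌋ = -⌊a⌋ - 1 := by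
  have h1 : (⌊a⌋ : ℝ) < a := (Int.floor_le a).lt_of_ne (fun h => ha ⌊a⌋ h.symm)
  have h2 : a < ⌊a⌋ + 1 := Int.lt_floor_add_one a
  rw [Int.floor_eq_iff] <;> push_cast <;> constructor <;> linarith


private lemma key1 (p q d : ℤ) (hq : 0 ≤ q) (h1 : p + q ≤ d) (h2 : d ≤ p + q + 2) :
    max (max |q - -d + -p| (|q + -d + -p + 1| - 1)) |(-q) + -d + -p| =
    max (max |p - q + d| (|p + q + d + 1| - 1)) |(-p) + q + d| := by
  simp only [Int.abs_eq_natAbs]; omega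

private lemma key2 (p q d : ℤ) (hq : q < 0) (h1 : p + q ≤ d) (h2 : d ≤ p + q + 2) :
    max (max |q - (-d - 1) + (-p - 1)| (|q + (-d - 1) + (-p - 1) + 1| - 1))
      |(-q) + (-d - 1) + (-p - 1)| =
    max (max |p - q + d| (|p + q + d + 1| - 1)) |(-p) + q + d| := by
  simp only [Int.abs_eq_natAbs]; omega

set_option maxHeartbeats 400000 in
/-- `V` is a first integral of `F` on the zero-free set `U = ℝ² ∖ 𝔉`. -/
theorem V_first_integral_two_pi_div_three (x y : ℝ)
    (h : ¬((∃ k : ℤ, y = Real.sqrt 3 * (x - 2 * k)) ∨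
           (∃ ℓ : ℤ, y = Real.sqrt 3 * ℓ) ∨
           (∃ m : ℤ, y = -Real.sqrt 3 * (x - 2 * m - 1)))) :
    V (F (x, y)) = V (x, y) := by
  push_neg at h
  obtain ⟨h1, h2, h3⟩ := h
  set r := Real.sqrt 3 with hrdef
  have hr2 : r * r = 3 := Real.mul_self_sqrt (by norm_num)
  have hr0 : (0 : ℝ) < r := Real.sqrt_pos.2 (by norm_num)
  set u : ℝ := (3 * x - r * y) / 6 with hu_def
  set v : ℝ := r * y / 3 with hv_def
  have hu : ∀ k : ℤ, u ≠ (k : ℝ) := by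
    intro k hk
    apply h1 k
    apply mul_left_cancel₀ hr0.ne'
    rw [hu_def] at hk
    linear_combination (-6 : ℝ) * hk - (x - 2 * (k : ℝ)) * hr2
  have hv : ∀ k : ℤ, v ≠ (k : ℝ) := by
    intro k hk
    apply h2 k
    apply mul_left_cancel₀ hr0.ne'
    rw [hv_def] at hk
    linear_combination (3 : ℝ) * hk - (k : ℝ) * hr2
  have hw : ∀ k : ℤ, u + v + 1 / 2 ≠ (k : ℝ) := by
    intro k hk
    apply h3 (k - 1)
    apply mul_left_cancel₀ hr0.ne'
    rw [hu_def, hv_def] at hk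
    push_cast
    linear_combination (6 : ℝ) * hk + (x - 2 * (k : ℝ) + 1) * hr2
  -- floors of u, v, w and bounds
  have hBx : B (x, y) = ⌊u⌋ := rfl
  have hCx : C (x, y) = ⌊v⌋ := rfl
  have hDx : D (x, y) = ⌊u + v + 1 / 2⌋ := by
    rw [D]; congr 1; rw [hu_def, hv_def]; ring
  have hboundl : ⌊u⌋ + ⌊v⌋ ≤ ⌊u + v + 1 / 2⌋ := by
    apply Int.le_floor.2
    push_cast
    have := Int.floor_le u
    have := Int.floor_le v
    linarith
  have hboundr : ⌊u + v + 1 / 2⌋ ≤ ⌊u⌋ + ⌊v⌋ + 2 := by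
    have : ⌊u + v + 1 / 2⌋ < ⌊u⌋ + ⌊v⌋ + 3 := by
      apply Int.floor_lt.2
      push_cast
      have := Int.lt_floor_add_one u
      have := Int.lt_floor_add_one v
      linarith
    omega
  by_cases hy : 0 ≤ y
  · -- σ = 1
    have hq0 : 0 ≤ ⌊v⌋ := Int.floor_nonneg.2 (by positivity)
    have hF1 : (F (x, y)).1 = -(x - 1) / 2 + (r / 2) * y := by
      simp [F, s, hy, hrdef]
    have hF2 : (F (x, y)).2 = -(r / 2) * (x - 1) - y / 2 := by
      simp [F, s, hy, hrdef]
    have hBF : B (F (x, y)) = ⌊v⌋ := by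
      rw [B, hF1, hF2, ← hrdef]
      congr 1
      rw [hv_def]
      linear_combination ((x - 1) / 12) * hr2
    have hCF : C (F (x, y)) = -⌊u + v + 1 / 2⌋ := by
      rw [C, hF2, ← hrdef]
      have : r * (-(r / 2) * (x - 1) - y / 2) / 3 = -(u + v + 1 / 2) + 1 := by
        rw [hu_def, hv_def]
        linear_combination (-(x - 1) / 6) * hr2
      rw [this, Int.floor_add_one, floor_neg_of_ne _ hw]
      ring
    have hDF : D (F (x, y)) = -⌊u⌋ := by
      rw [D, hF1, hF2, ← hrdef]
      have : (3 * (-(x - 1) / 2 + r / 2 * y) + r * (-(r / 2) * (x - 1) - y / 2) + 3) / 6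
          = -u + 1 := by
        rw [hu_def]
        linear_combination (-(x - 1) / 12) * hr2
      rw [this, Int.floor_add_one, floor_neg_of_ne _ hu]
      ring
    rw [V, V, hBF, hCF, hDF, hBx, hCx, hDx]
    exact key1 ⌊u⌋ ⌊v⌋ ⌊u + v + 1 / 2⌋ hq0 hboundl hboundr
  · -- σ = -1
    have hq0 : ⌊v⌋ < 0 := by
      apply Int.floor_lt.2
      push_cast
      rw [hv_def]
      push_neg at hy
      have : r * y < 0 := mul_neg_of_pos_of_neg hr0 hy
      linarith
    have hF1 : (F (x, y)).1 = -(x + 1) / 2 + (r / 2) * y := by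
      simp only [F, s, if_neg hy, hrdef]
      ring_nf
    have hF2 : (F (x, y)).2 = -(r / 2) * (x + 1) - y / 2 := by
      simp only [F, s, if_neg hy, hrdef]
      ring_nf
    have hBF : B (F (x, y)) = ⌊v⌋ := by
      rw [B, hF1, hF2, ← hrdef]
      congr 1
      rw [hv_def]
      linear_combination ((x + 1) / 12) * hr2
    have hCF : C (F (x, y)) = -⌊u + v + 1 / 2⌋ - 1 := by
      rw [C, hF2, ← hrdef]
      have : r * (-(r / 2) * (x + 1) - y / 2) / 3 = -(u + v + 1 / 2) := by
        rw [hu_def, hv_def]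
        linear_combination (-(x + 1) / 6) * hr2
      rw [this, floor_neg_of_ne _ hw]
    have hDF : D (F (x, y)) = -⌊u⌋ - 1 := by
      rw [D, hF1, hF2, ← hrdef]
      have : (3 * (-(x + 1) / 2 + r / 2 * y) + r * (-(r / 2) * (x + 1) - y / 2) + 3) / 6
          = -u := by
        rw [hu_def]
        linear_combination (-(x + 1) / 12) * hr2
      rw [this, floor_neg_of_ne _ hu]
    rw [V, V, hBF, hCF, hDF, hBx, hCx, hDx]
    exact key2 ⌊u⌋ ⌊v⌋ ⌊u + v + 1 / 2⌋ hq0 hboundl hboundr
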